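/- In the ring R = ℝ[ϖ_1,…,ϖ_{n-1}]/I, where I is the ideal generated by the elements α_i·ϖ_i for 1 ≤ i ≤ n-1 with α_i := -ϖ_{i-1} + 2ϖ_i - ϖ_{i+1} (convention ϖ_0 = ϖ_n = 0), for all 1 ≤ a ≤ i ≤ b ≤ n-1 the following identity holds: (ϖ_a ϖ_{a+1} ⋯ ϖ_i)·(ϖ_i ϖ_{i+1} ⋯ ϖ_b) = ((b-i+1)/(b-a+2))·ϖ_{a-1} ϖ_a ⋯ ϖ_b + ((i-a+1)/(b-a+2))·ϖ_a ϖ_{a+1} ⋯ ϖ_{b+1}. -/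
import Mathlib

open MvPolynomial Finset

private theorem aux_affine {M : Type*} [AddCommGroup M] [Module ℝ M]
    (s c : ℝ) (hc : c ≠ 0) (X Y Z : M) (hY : Y = X + c • (Z - X)) :
    X + s • (Z - X) = ((c - s) / c) • X + (s / c) • Y := by
  subst hY
  match_scalars <;> field_simp <;> ring

set_option maxHeartbeats 1000000 in
/-- Lemma 4.4 (AHKZ Lemma 5.1): the type-A Peterson ring relation. -/
theorem stmt_0 (n : ℕ) (hn : 2 ≤ n)
    (ϖ : ℕ → MvPolynomial ℕ ℝ)
    (hϖ : ∀ k, ϖ k = if 1 ≤ k ∧ k ≤ n - 1 then X k else 0)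
    (I : Ideal (MvPolynomial ℕ ℝ))
    (hI : I = Ideal.span
      {p | ∃ k, 1 ≤ k ∧ k ≤ n - 1 ∧
        p = (-ϖ (k - 1) + 2 * ϖ k - ϖ (k + 1)) * ϖ k})
    (a i b : ℕ) (ha : 1 ≤ a) (hai : a ≤ i) (hib : i ≤ b) (hb : b ≤ n - 1) :
    Ideal.Quotient.mk I ((∏ k ∈ Finset.Icc a i, ϖ k) * ∏ k ∈ Finset.Icc i b, ϖ k) =
      (((b : ℝ) - i + 1) / ((b : ℝ) - a + 2)) •
          Ideal.Quotient.mk I (∏ k ∈ Finset.Icc (a - 1) b, ϖ k) +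
        (((i : ℝ) - a + 1) / ((b : ℝ) - a + 2)) •
          Ideal.Quotient.mk I (∏ k ∈ Finset.Icc a (b + 1), ϖ k) := by
  have hc : (b : ℝ) - a + 2 ≠ 0 := by
    have h1 : (a : ℝ) ≤ b := by exact_mod_cast hai.trans hib
    linarith
  set mk := Ideal.Quotient.mk I with hmk
  set P : MvPolynomial ℕ ℝ := ∏ k ∈ Finset.Icc a b, ϖ k with hP
  -- the linear recurrence coming from the defining relations
  have hrec : ∀ j, a ≤ j → j ≤ b →
      mk (ϖ (j - 1) * P) + mk (ϖ (j + 1) * P) = mk (ϖ j * P) + mk (ϖ j * P) := by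
    intro j hja hjb
    have hgen : (-ϖ (j - 1) + 2 * ϖ j - ϖ (j + 1)) * ϖ j ∈ I := by
      rw [hI]
      exact Ideal.subset_span ⟨j, le_trans ha hja, le_trans hjb hb, rfl⟩
    have hQ : ϖ j * ∏ k ∈ (Finset.Icc a b).erase j, ϖ k = P :=
      Finset.mul_prod_erase _ _ (by simp only [Finset.mem_Icc]; omega)
    have hmem : (-ϖ (j - 1) + 2 * ϖ j - ϖ (j + 1)) * P ∈ I := by
      have h := Ideal.mul_mem_right (∏ k ∈ (Finset.Icc a b).erase j, ϖ k) _ hgen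
      rwa [mul_assoc, hQ] at h
    have h0 : mk (ϖ j * P + ϖ j * P - (ϖ (j - 1) * P + ϖ (j + 1) * P)) = 0 := by
      rw [show ϖ j * P + ϖ j * P - (ϖ (j - 1) * P + ϖ (j + 1) * P)
          = (-ϖ (j - 1) + 2 * ϖ j - ϖ (j + 1)) * P by ring]
      exact Ideal.Quotient.eq_zero_iff_mem.2 hmem
    rw [map_sub, map_add, map_add, sub_eq_zero] at h0
    exact h0.symm
  -- key affine interpolation
  have key : ∀ m, a + m ≤ b + 1 →
      mk (ϖ (a + m) * P)
        = mk (ϖ (a - 1) * P) + ((m : ℝ) + 1) • (mk (ϖ a * P) - mk (ϖ (a - 1) * P)) := by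
    intro m
    induction m using Nat.strong_induction_on with
    | _ m ih =>
      match m with
      | 0 =>
        intro _
        rw [Nat.add_zero]
        push_cast
        module
      | 1 =>
        intro h
        have hr := hrec a le_rfl (by omega)
        have h1 : mk (ϖ (a + 1) * P) = mk (ϖ a * P) + mk (ϖ a * P) - mk (ϖ (a - 1) * P) := by
          linear_combination hr
        rw [h1]
        push_cast
        module
      | (m + 2) =>
        intro h
        have h1 := ih (m + 1) (by omega) (by omega)
        have h0 := ih m (by omega) (by omega)
        have hr := hrec (a + m + 1) (by omega) (by omega)
        rw [show a + m + 1 - 1 = a + m from by omega,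
            show a + m + 1 + 1 = a + (m + 2) from by omega] at hr
        have h2 : mk (ϖ (a + (m + 2)) * P)
            = mk (ϖ (a + m + 1) * P) + mk (ϖ (a + m + 1) * P) - mk (ϖ (a + m) * P) := by
          linear_combination hr
        rw [h2, show a + m + 1 = a + (m + 1) from rfl, h1, h0]
        push_cast
        module
  -- rewrite the left-hand side
  have hLHS : (∏ k ∈ Finset.Icc a i, ϖ k) * ∏ k ∈ Finset.Icc i b, ϖ k = ϖ i * P := by
    have h1 : ∏ k ∈ Finset.Icc i b, ϖ k = ϖ i * ∏ k ∈ Finset.Ico (i + 1) (b + 1), ϖ k := by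
      rw [← Finset.Ico_add_one_right_eq_Icc, Finset.prod_eq_prod_Ico_succ_bot (by omega)]
    have h2 : (∏ k ∈ Finset.Icc a i, ϖ k) * ∏ k ∈ Finset.Ico (i + 1) (b + 1), ϖ k = P := by
      rw [hP, ← Finset.Ico_add_one_right_eq_Icc, ← Finset.Ico_add_one_right_eq_Icc,
        Finset.prod_Ico_consecutive _ (by omega) (by omega)]
    rw [h1, ← mul_assoc, mul_comm (∏ k ∈ Finset.Icc a i, ϖ k) (ϖ i), mul_assoc, h2]
  -- rewrite the endpoint products
  have hXa : mk (∏ k ∈ Finset.Icc (a - 1) b, ϖ k) = mk (ϖ (a - 1) * P) := by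
    congr 1
    rw [← Finset.Ico_add_one_right_eq_Icc, Finset.prod_eq_prod_Ico_succ_bot (by omega),
      show a - 1 + 1 = a from by omega, Finset.Ico_add_one_right_eq_Icc, hP]
  have hXb : mk (∏ k ∈ Finset.Icc a (b + 1), ϖ k) = mk (ϖ (b + 1) * P) := by
    congr 1
    rw [Finset.prod_Icc_succ_top (by omega : a ≤ b + 1), hP, mul_comm]
  rw [hLHS, hXa, hXb]
  have hi := key (i - a) (by omega)
  rw [show a + (i - a) = i from by omega] at hi
  have hcast : ((i - a : ℕ) : ℝ) = (i : ℝ) - a := by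
    rw [Nat.cast_sub hai]
  rw [hcast] at hi
  have hb1 := key (b + 1 - a) (by omega)
  rw [show a + (b + 1 - a) = b + 1 from by omega] at hb1
  have hcast2 : ((b + 1 - a : ℕ) : ℝ) = (b : ℝ) - a + 1 := by
    rw [Nat.cast_sub (by omega)]
    push_cast
    ring
  rw [hcast2, show (b : ℝ) - a + 1 + 1 = (b : ℝ) - a + 2 from by ring] at hb1
  rw [hi, show (b : ℝ) - i + 1 = ((b : ℝ) - a + 2) - ((i : ℝ) - a + 1) from by ring]
  exact aux_affine _ _ hc _ _ _ hb1
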